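/- Any nilpotent group of orientation-preserving piecewise linear homeomorphisms of the closed interval [0,1] is abelian. -/

import Mathlib

open Set
open scoped commutatorElement

/-- `f : ℝ → ℝ` is piecewise linear on `[0,1]`: there is a finite partition
`0 = t₀ < t₁ < ⋯ < t_k = 1` such that `f` is affine on each subinterval
`[t_{i}, t_{i+1}]`. -/
def IsPLOnUnitInterval (f : ℝ → ℝ) : Prop :=
  ∃ (k : ℕ) (t : ℕ → ℝ), 0 < k ∧ t 0 = 0 ∧ t k = 1 ∧
    (∀ i < k, t i < t (i + 1)) ∧
    ∀ i < k, ∃ m c : ℝ, ∀ x ∈ Icc (t i) (t (i + 1)), f x = m * x + c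

/-- Key analytic lemma: if `z = ⁅a,b⁆` commutes with `a` and `b`, then `z = 1`.
(No "Heisenberg triple" in PL₊[0,1]: the right slope of `z` at the infimum of
its support must be `1`, forcing `z` to be the identity near that infimum.) -/
lemma PL_comm_trivial {G : Type*} [Group G] (ρ : G → ℝ → ℝ)
    (hmul : ∀ g h : G, ∀ x ∈ Icc (0:ℝ) 1, ρ (g * h) x = ρ g (ρ h x))
    (hone : ∀ x ∈ Icc (0:ℝ) 1, ρ 1 x = x)
    (hhomeo : ∀ g : G, StrictMonoOn (ρ g) (Icc (0:ℝ) 1) ∧ ρ g '' Icc (0:ℝ) 1 = Icc (0:ℝ) 1)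
    (hPL : ∀ g : G, IsPLOnUnitInterval (ρ g))
    (hfaithful : ∀ g : G, (∀ x ∈ Icc (0:ℝ) 1, ρ g x = x) → g = 1)
    (a b : G) (ha : Commute ⁅a,b⁆ a) (hb : Commute ⁅a,b⁆ b) : ⁅a,b⁆ = 1 := by
  classical
  by_contra hz
  set z := ⁅a,b⁆ with hzdef
  -- basic facts
  have mapsTo : ∀ g : G, ∀ x ∈ Icc (0:ℝ) 1, ρ g x ∈ Icc (0:ℝ) 1 := by
    intro g x hx
    rw [← (hhomeo g).2]
    exact mem_image_of_mem _ hx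
  have inj : ∀ g : G, ∀ x ∈ Icc (0:ℝ) 1, ∀ y ∈ Icc (0:ℝ) 1, ρ g x = ρ g y → x = y :=
    fun g x hx y hy h => (hhomeo g).1.injOn hx hy h
  have mono : ∀ g : G, ∀ x ∈ Icc (0:ℝ) 1, ∀ y ∈ Icc (0:ℝ) 1, x ≤ y → ρ g x ≤ ρ g y := by
    intro g x hx y hy hxy
    rcases eq_or_lt_of_le hxy with rfl | h
    · exact le_refl _
    · exact ((hhomeo g).1 hx hy h).le
  have hinv : ∀ g : G, ∀ x ∈ Icc (0:ℝ) 1, ρ g⁻¹ (ρ g x) = x := by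
    intro g x hx
    rw [← hmul g⁻¹ g x hx, inv_mul_cancel, hone x hx]
  have fix1 : ∀ g : G, ρ g 1 = 1 := by
    intro g
    have h1 : ρ g 1 ∈ Icc (0:ℝ) 1 := mapsTo g 1 ⟨zero_le_one, le_refl _⟩
    have h2 : (1:ℝ) ∈ ρ g '' Icc (0:ℝ) 1 := by rw [(hhomeo g).2]; exact ⟨zero_le_one, le_refl _⟩
    obtain ⟨y, hy, hy1⟩ := h2
    have : ρ g y ≤ ρ g 1 := mono g y hy 1 ⟨zero_le_one, le_refl _⟩ hy.2
    rw [hy1] at this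
    exact le_antisymm h1.2 this
  -- the support set
  set S : Set ℝ := {x | x ∈ Icc (0:ℝ) 1 ∧ ρ z x ≠ x} with hSdef
  have Sne : S.Nonempty := by
    by_contra h
    rw [Set.not_nonempty_iff_eq_empty] at h
    refine hz (hfaithful z ?_)
    intro x hx
    by_contra hne
    have hmem : x ∈ S := ⟨hx, hne⟩
    rw [h] at hmem
    exact hmem
  have Sbdd : BddBelow S := ⟨0, fun x hx => hx.1.1⟩
  set s := sInf S with hs
  have hs_le : ∀ x ∈ S, s ≤ x := fun x hx => csInf_le Sbdd hx
  have hs0 : 0 ≤ s := le_csInf Sne (fun x hx => hx.1.1)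
  obtain ⟨x₀, hx₀⟩ := Sne
  have hx01 : x₀ < 1 := by
    rcases lt_or_eq_of_le hx₀.1.2 with h | h
    · exact h
    · exact absurd (h ▸ fix1 z) hx₀.2
  have hs1 : s < 1 := lt_of_le_of_lt (hs_le x₀ hx₀) hx01
  have hsI : s ∈ Icc (0:ℝ) 1 := ⟨hs0, hs1.le⟩
  -- invariance of S under elements commuting with z
  have memS : ∀ g : G, Commute z g → ∀ x ∈ S, ρ g x ∈ S := by
    intro g hg x hx
    refine ⟨mapsTo g x hx.1, ?_⟩
    intro h
    have h1 : ρ (z*g) x = ρ z (ρ g x) := hmul z g x hx.1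
    have h2 : ρ (g*z) x = ρ g (ρ z x) := hmul g z x hx.1
    rw [hg.eq] at h1
    have h3 : ρ g (ρ z x) = ρ g x := by rw [← h2, h1, h]
    exact hx.2 (inj g _ (mapsTo z x hx.1) _ hx.1 h3)
  -- elements commuting with z fix s
  have le_s : ∀ g : G, Commute z g → ρ g s ≤ s := by
    intro g hg
    apply le_csInf ⟨x₀, hx₀⟩
    intro y hy
    have h1 : ρ g⁻¹ y ∈ S := memS g⁻¹ hg.inv_right y hy
    have h2 : s ≤ ρ g⁻¹ y := hs_le _ h1
    have h3 : ρ g s ≤ ρ g (ρ g⁻¹ y) := mono g s hsI _ h1.1 h2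
    have h4 : ρ g (ρ g⁻¹ y) = y := by
      have := hinv g⁻¹ y hy.1
      rwa [inv_inv] at this
    rwa [h4] at h3
  have fixs : ∀ g : G, Commute z g → ρ g s = s := by
    intro g hg
    have h1 := le_s g hg
    have h2 := le_s g⁻¹ hg.inv_right
    have h3 : ρ g s ∈ Icc (0:ℝ) 1 := mapsTo g s hsI
    have h4 : s = ρ g⁻¹ (ρ g s) := (hinv g s hsI).symm
    have h5 : ρ g⁻¹ (ρ g s) ≤ ρ g⁻¹ s := mono g⁻¹ _ h3 _ hsI h1
    have h6 : s ≤ ρ g⁻¹ s := by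
      calc s = ρ g⁻¹ (ρ g s) := h4
        _ ≤ ρ g⁻¹ s := h5
    have h7 : ρ g⁻¹ s = s := le_antisymm h2 h6
    have h8 : ρ g⁻¹ (ρ g s) = ρ g⁻¹ s := by rw [← h4, h7]
    exact inj g⁻¹ _ h3 _ hsI h8
  -- right slope predicate at s
  set P : G → ℝ → Prop := fun g m => 0 < m ∧ ∃ δ > 0, ∀ x, s ≤ x → x ≤ 1 → x ≤ s + δ →
      ρ g x = m * (x - s) + s with hPdef
  have slope_exists : ∀ g : G, ρ g s = s → ∃ m, P g m := by
    intro g hgs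
    obtain ⟨k, t, hk, ht0, htk, hlt, haff⟩ := hPL g
    have tmono : ∀ j, j ≤ k → ∀ i, i ≤ j → t i ≤ t j := by
      intro j
      induction j with
      | zero => intro _ i hi; interval_cases i; exact le_refl _
      | succ n ih =>
        intro hj i hi
        rcases Nat.lt_or_ge i (n+1) with h | h
        · exact le_trans (ih (by omega) i (by omega)) (hlt n (by omega)).le
        · have : i = n + 1 := by omega
          rw [this]
      
    set Q : ℕ → Prop := fun j => t j ≤ s with hQdef
    have hQ0 : Q 0 := by rw [hQdef]; simpa [ht0] using hs0
    set i := Nat.findGreatest Q k with hidef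
    have hQi : Q i := Nat.findGreatest_spec (Nat.zero_le k) hQ0
    have hik : i ≤ k := Nat.findGreatest_le k
    have hiklt : i < k := by
      rcases lt_or_eq_of_le hik with h | h
      · exact h
      · exfalso; rw [h] at hQi; rw [hQdef] at hQi; simp only [htk] at hQi; linarith
    have hnext : s < t (i+1) := by
      have hng : ¬ Q (i+1) := Nat.findGreatest_is_greatest (n := k) (by omega) (by omega)
      rw [hQdef] at hng
      exact not_le.mp hng
    obtain ⟨m, c, hmc⟩ := haff i hiklt
    have ht1le : t (i+1) ≤ 1 := by
      have := tmono k le_rfl (i+1) (by omega)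
      rwa [htk] at this
    have ht1ge : (0:ℝ) ≤ t (i+1) := by
      have := tmono (i+1) (by omega) 0 (Nat.zero_le _)
      rwa [ht0] at this
    have hsmem : s ∈ Icc (t i) (t (i+1)) := ⟨hQi, hnext.le⟩
    have hcs : m * s + c = s := by rw [← hmc s hsmem, hgs]
    have key : ∀ x, s ≤ x → x ≤ 1 → x ≤ s + (t (i+1) - s) → ρ g x = m * (x - s) + s := by
      intro x h1 _ h3
      have hx : x ∈ Icc (t i) (t (i+1)) := ⟨le_trans hQi h1, by linarith⟩
      rw [hmc x hx]
      linear_combination hcs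
    have hmpos : 0 < m := by
      have h1 : ρ g s < ρ g (t (i+1)) :=
        (hhomeo g).1 hsI ⟨ht1ge, ht1le⟩ hnext
      rw [hgs, key (t (i+1)) hnext.le ht1le (by linarith)] at h1
      nlinarith [hnext]
    exact ⟨m, hmpos, t (i+1) - s, by linarith, key⟩
  have slope_mul : ∀ g h : G, ∀ mg mh, P g mg → P h mh → P (g*h) (mg*mh) := by
    rintro g h mg mh ⟨hmg, δg, hδg, Hg⟩ ⟨hmh, δh, hδh, Hh⟩
    refine ⟨mul_pos hmg hmh, min δh (δg / mh), lt_min hδh (div_pos hδg hmh), ?_⟩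
    intro x h1 h2 h3
    have hxI : x ∈ Icc (0:ℝ) 1 := ⟨le_trans hs0 h1, h2⟩
    have hhx : ρ h x = mh * (x - s) + s :=
      Hh x h1 h2 (le_trans h3 (by simp [min_le_left]))
    have hhxI : ρ h x ∈ Icc (0:ℝ) 1 := mapsTo h x hxI
    have e1 : s ≤ ρ h x := by rw [hhx]; nlinarith
    have e2 : ρ h x ≤ s + δg := by
      have hb1 : x - s ≤ δg / mh := by
        have := min_le_right δh (δg / mh); linarith
      have hb2 : mh * (x - s) ≤ δg := by
        calc mh * (x - s) ≤ mh * (δg / mh) := mul_le_mul_of_nonneg_left hb1 hmh.le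
          _ = δg := by field_simp
      rw [hhx]; linarith
    rw [hmul g h x hxI, Hg _ e1 hhxI.2 e2, hhx]
    ring
  have slope_one : P 1 1 := by
    refine ⟨one_pos, 1, one_pos, ?_⟩
    intro x h1 h2 _
    rw [hone x ⟨le_trans hs0 h1, h2⟩]
    ring
  have slope_unique : ∀ g : G, ∀ m m', P g m → P g m' → m = m' := by
    rintro g m m' ⟨_, δ, hδ, H⟩ ⟨_, δ', hδ', H'⟩
    set x := min (s + min δ δ') ((s+1)/2) with hxdef
    have hmin : 0 < min δ δ' := lt_min hδ hδ'
    have hx1 : s < x := lt_min (by linarith) (by linarith)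
    have hx2 : x ≤ 1 := le_trans (min_le_right _ _) (by linarith)
    have hx3 : x ≤ s + δ :=
      le_trans (min_le_left _ _) (by have := min_le_left δ δ'; linarith)
    have hx4 : x ≤ s + δ' :=
      le_trans (min_le_left _ _) (by have := min_le_right δ δ'; linarith)
    have heq : m * (x - s) + s = m' * (x - s) + s := by
      rw [← H x hx1.le hx2 hx3, H' x hx1.le hx2 hx4]
    have hxs : x - s ≠ 0 := ne_of_gt (by linarith)
    have : m * (x - s) = m' * (x - s) := by linarith
    exact mul_right_cancel₀ hxs this
  -- assemble
  have hfa : ρ a s = s := fixs a ha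
  have hfb : ρ b s = s := fixs b hb
  have hfa' : ρ a⁻¹ s = s := fixs a⁻¹ ha.inv_right
  have hfb' : ρ b⁻¹ s = s := fixs b⁻¹ hb.inv_right
  obtain ⟨ma, hma⟩ := slope_exists a hfa
  obtain ⟨mb, hmb⟩ := slope_exists b hfb
  obtain ⟨mai, hmai⟩ := slope_exists a⁻¹ hfa'
  obtain ⟨mbi, hmbi⟩ := slope_exists b⁻¹ hfb'
  have haai : ma * mai = 1 := by
    have h := slope_mul a a⁻¹ ma mai hma hmai
    rw [mul_inv_cancel] at h
    exact slope_unique 1 _ _ h slope_one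
  have hbbi : mb * mbi = 1 := by
    have h := slope_mul b b⁻¹ mb mbi hmb hmbi
    rw [mul_inv_cancel] at h
    exact slope_unique 1 _ _ h slope_one
  have hPz' : P (a*(b*(a⁻¹*b⁻¹))) (ma*(mb*(mai*mbi))) :=
    slope_mul a _ _ _ hma (slope_mul b _ _ _ hmb (slope_mul a⁻¹ b⁻¹ _ _ hmai hmbi))
  have hzeq : z = a*(b*(a⁻¹*b⁻¹)) := by
    rw [hzdef, commutatorElement_def, mul_assoc, mul_assoc]
  have hprod : ma*(mb*(mai*mbi)) = 1 := by
    have h : ma*(mb*(mai*mbi)) = (ma*mai)*(mb*mbi) := by ring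
    rw [h, haai, hbbi, one_mul]
  have hPz : P z 1 := by
    rw [hzeq, ← hprod]
    exact hPz'
  obtain ⟨-, δ, hδ, H⟩ := hPz
  have hε : 0 < min δ (1 - s) := lt_min hδ (by linarith)
  obtain ⟨x, hxS, hxlt⟩ := exists_lt_of_csInf_lt ⟨x₀, hx₀⟩
    (show sInf S < s + min δ (1 - s) by rw [← hs]; linarith)
  have hxs : s ≤ x := hs_le x hxS
  have hfix : ρ z x = x := by
    rw [H x hxs hxS.1.2 (by have := min_le_left δ (1-s); linarith)]
    ring
  exact hxS.2 hfix

/-- Any nilpotent group of orientation-preserving piecewise linear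
homeomorphisms of `[0,1]` is abelian.  The group is encoded as an abstract
nilpotent group `G` with a faithful action `ρ` on `[0,1]` by strictly
increasing piecewise linear bijections of `[0,1]`. -/
theorem abelian_of_nilpotent_PL_homeos_Icc
    {G : Type*} [Group G] [Group.IsNilpotent G] (ρ : G → ℝ → ℝ)
    (hmul : ∀ g h : G, ∀ x ∈ Icc (0:ℝ) 1, ρ (g * h) x = ρ g (ρ h x))
    (hone : ∀ x ∈ Icc (0:ℝ) 1, ρ 1 x = x)
    (hhomeo : ∀ g : G, StrictMonoOn (ρ g) (Icc (0:ℝ) 1) ∧ ρ g '' Icc (0:ℝ) 1 = Icc (0:ℝ) 1)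
    (hPL : ∀ g : G, IsPLOnUnitInterval (ρ g))
    (hfaithful : ∀ g : G, (∀ x ∈ Icc (0:ℝ) 1, ρ g x = x) → g = 1) :
    ∀ a b : G, a * b = b * a := by
  have key : ∀ a b : G, Commute ⁅a,b⁆ a → Commute ⁅a,b⁆ b → ⁅a,b⁆ = 1 :=
    PL_comm_trivial ρ hmul hone hhomeo hPL hfaithful
  -- descent along the lower central series
  have step : ∀ m : ℕ, Subgroup.lowerCentralSeries (⊤ : Subgroup G) (m+2) = ⊥ → Subgroup.lowerCentralSeries (⊤ : Subgroup G) (m+1) = ⊥ := by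
    intro m hm
    have hcent : ∀ w : G, w ∈ Subgroup.lowerCentralSeries (⊤ : Subgroup G) (m+1) → ∀ g : G, Commute w g := by
      intro w hw g
      have h1 : ⁅w, g⁆ ∈ Subgroup.lowerCentralSeries (⊤ : Subgroup G) (m+2) := by
        rw [lowerCentralSeries_succ]
        exact Subgroup.commutator_mem_commutator hw (Subgroup.mem_top g)
      rw [hm, Subgroup.mem_bot] at h1
      exact commutatorElement_eq_one_iff_commute.mp h1
    have h2 : ⁅Subgroup.lowerCentralSeries (⊤ : Subgroup G) m, (⊤ : Subgroup G)⁆ ≤ (⊥ : Subgroup G) := by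
      rw [Subgroup.commutator_le]
      intro p hp q hq
      have hzmem : ⁅p,q⁆ ∈ Subgroup.lowerCentralSeries (⊤ : Subgroup G) (m+1) := by
        rw [lowerCentralSeries_succ]
        exact Subgroup.commutator_mem_commutator hp hq
      rw [Subgroup.mem_bot]
      exact key p q (hcent _ hzmem p) (hcent _ hzmem q)
    rw [lowerCentralSeries_succ]
    exact le_bot_iff.mp h2
  obtain ⟨n, hn⟩ := Subgroup.nilpotent_iff_lowerCentralSeries.mp ‹Group.IsNilpotent G›
  have hn1 : Subgroup.lowerCentralSeries (⊤ : Subgroup G) (n+1) = ⊥ := by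
    apply le_bot_iff.mp
    rw [← hn]
    exact Subgroup.lowerCentralSeries_antitone ⊤ (Nat.le_succ n)
  have desc : ∀ m : ℕ, Subgroup.lowerCentralSeries (⊤ : Subgroup G) (m+1) = ⊥ → Subgroup.lowerCentralSeries (⊤ : Subgroup G) 1 = ⊥ := by
    intro m
    induction m with
    | zero => exact id
    | succ p ih => intro h; exact ih (step p h)
  have h1 : Subgroup.lowerCentralSeries (⊤ : Subgroup G) 1 = ⊥ := desc n hn1
  intro a b
  have hmem : ⁅a,b⁆ ∈ Subgroup.lowerCentralSeries (⊤ : Subgroup G) 1 := by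
    rw [lowerCentralSeries_succ, lowerCentralSeries_zero]
    exact Subgroup.commutator_mem_commutator (Subgroup.mem_top a) (Subgroup.mem_top b)
  rw [h1, Subgroup.mem_bot] at hmem
  exact (commutatorElement_eq_one_iff_commute.mp hmem).eq
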